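/- Let (𝒯, ℱ) be a torsion pair on an abelian category A, E• a cochain complex in A, and Aⁿ ⊆ Eⁿ the subobjects with im(δ^{n-1}) ⊆ Aⁿ ⊆ ker(δⁿ), Aⁿ/im(δ^{n-1}) ∈ 𝒯, ker(δⁿ)/Aⁿ ∈ ℱ. Define ℍⁿ(E•) to be the two-term complex [Eⁿ/Aⁿ → A^{n+1}] (with map induced by δⁿ). Then for every n there is a short exact sequence 0 → H⁰(ℍ^{n-1}(E•)) → Hⁿ(E•) → H^{-1}(ℍⁿ(E•)) → 0, where H⁰(ℍ^{n-1}(E•)) = A^{n}/im(δ^{n-1}) ∈ 𝒯 and H^{-1}(ℍⁿ(E•)) = ker(δⁿ)/Aⁿ ∈ ℱ. -/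

import Mathlib

open CategoryTheory CategoryTheory.Limits CategoryTheory.Abelian

universe v u

open Pseudoelement in
lemma cokernel_ses_aux {C : Type u} [Category.{v} C] [Abelian C] {I B K : C}
    (u : I ⟶ B) (v : B ⟶ K) (m : I ⟶ K) (hm : u ≫ v = m) [Mono u] [Mono v] :
    ∃ (i : cokernel u ⟶ cokernel m) (p : cokernel m ⟶ cokernel v)
      (w' : i ≫ p = 0), (ShortComplex.mk i p w').ShortExact := by
  subst hm
  let i : cokernel u ⟶ cokernel (u ≫ v) := cokernel.map u (u ≫ v) (𝟙 I) v (by simp)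
  let p : cokernel (u ≫ v) ⟶ cokernel v := cokernel.desc _ (cokernel.π v) (by simp)
  have hi : cokernel.π u ≫ i = v ≫ cokernel.π (u ≫ v) := by simp [i]
  have hp : cokernel.π (u ≫ v) ≫ p = cokernel.π v := by simp [p]
  have hip : i ≫ p = 0 := by
    rw [← cancel_epi (cokernel.π u), ← Category.assoc, hi, Category.assoc, hp,
      cokernel.condition, comp_zero]
  have hexm : (ShortComplex.mk (u ≫ v) (cokernel.π (u ≫ v)) (cokernel.condition _)).Exact :=
    ShortComplex.exact_of_g_is_cokernel _ (cokernelIsCokernel _)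
  have hexv : (ShortComplex.mk v (cokernel.π v) (cokernel.condition _)).Exact :=
    ShortComplex.exact_of_g_is_cokernel _ (cokernelIsCokernel _)
  have hmono : Mono i := by
    apply mono_of_zero_of_map_zero
    intro a ha
    obtain ⟨b, hb⟩ := pseudo_surjective_of_epi (cokernel.π u) a
    have h1 : (cokernel.π (u ≫ v)) (v b) = 0 := by
      rw [← Pseudoelement.comp_apply, ← hi, Pseudoelement.comp_apply, hb, ha]
    obtain ⟨c, hc⟩ := pseudo_exact_of_exact hexm _ h1
    rw [Pseudoelement.comp_apply] at hc
    have hc' : u c = b := pseudo_injective_of_mono v hc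
    rw [← hb, ← hc', ← Pseudoelement.comp_apply, cokernel.condition, Pseudoelement.zero_apply]
  have hepi : Epi p := by
    have : Epi (cokernel.π (u ≫ v) ≫ p) := by rw [hp]; infer_instance
    exact epi_of_epi (cokernel.π (u ≫ v)) p
  have hex : (ShortComplex.mk i p hip).Exact := by
    apply exact_of_pseudo_exact
    intro b hb
    obtain ⟨k, hk⟩ := pseudo_surjective_of_epi (cokernel.π (u ≫ v)) b
    have h1 : (cokernel.π v) k = 0 := by
      rw [← hp, Pseudoelement.comp_apply, hk]; exact hb
    obtain ⟨b', hb'⟩ := pseudo_exact_of_exact hexv _ h1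
    refine ⟨(cokernel.π u) b', ?_⟩
    show i _ = b
    rw [← Pseudoelement.comp_apply, hi, Pseudoelement.comp_apply, hb', hk]
  exact ⟨i, p, hip, { exact := hex }⟩


/-- A torsion pair (torsion theory) on an abelian category. -/
structure TorsionPair (A : Type u) [Category.{v} A] [Abelian A] where
  /-- the torsion class -/
  T : A → Prop
  /-- the torsion-free class -/
  F : A → Prop
  T_iso : ∀ {X Y : A}, (X ≅ Y) → T X → T Y
  F_iso : ∀ {X Y : A}, (X ≅ Y) → F X → F Y
  hom_zero : ∀ {X Y : A}, T X → F Y → ∀ f : X ⟶ Y, f = 0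
  exists_ses : ∀ X : A, ∃ (t f : A) (i : t ⟶ X) (p : X ⟶ f) (w : i ≫ p = 0),
    T t ∧ F f ∧ (ShortComplex.mk i p w).ShortExact

/-- Given a torsion pair, a two-step complex `f : X ⟶ Y`, `g : Y ⟶ Z` (representing
`δ^{n-1}, δⁿ`), and the interpolating subobject `A` with `im f ⊆ A ⊆ ker g`,
`A/im f ∈ 𝒯` and `ker g/A ∈ ℱ`, there is a short exact sequence
`0 → H⁰(ℍ^{n-1}) → Hⁿ → H^{-1}(ℍⁿ) → 0`, i.e.
`0 → A/im f → ker g/im f → ker g/A → 0`, whose left term lies in `𝒯` and whose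
right term lies in `ℱ`. -/
theorem cohomology_torsion_ses {A : Type u} [Category.{v} A] [Abelian A]
    (tp : TorsionPair A) {X Y Z : A} (f : X ⟶ Y) (g : Y ⟶ Z) (w : f ≫ g = 0)
    (Asub : Subobject Y)
    (h1 : imageSubobject f ≤ Asub) (h2 : Asub ≤ kernelSubobject g)
    (hT : tp.T (cokernel (Subobject.ofLE _ _ h1)))
    (hF : tp.F (cokernel (Subobject.ofLE _ _ h2))) :
    tp.T (cokernel (Subobject.ofLE _ _ h1)) ∧
    tp.F (cokernel (Subobject.ofLE _ _ h2)) ∧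
    ∃ (i : cokernel (Subobject.ofLE _ _ h1) ⟶ cokernel (imageToKernel f g w))
      (p : cokernel (imageToKernel f g w) ⟶ cokernel (Subobject.ofLE _ _ h2))
      (w' : i ≫ p = 0),
      (ShortComplex.mk i p w').ShortExact := by
  refine ⟨hT, hF, ?_⟩
  exact cokernel_ses_aux _ _ _ (by rw [imageToKernel, Subobject.ofLE_comp_ofLE])
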